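/- Let A ∈ ℝ^{n×n}, B ∈ ℝ^{n×m}, and fix an index t. Suppose K_t, K_{t+1} ∈ ℝ^{m×n}, invertible matrices H_t, H_{t+1} and matrices L_t, L_{t+1} satisfy A+BK_t = H_t L_t H_t^{-1}, A+BK_{t+1} = H_{t+1} L_{t+1} H_{t+1}^{-1}, ‖L_t‖ ≤ 1−γ, ‖H_{t+1}^{-1} H_t‖ ≤ 1 + γ/2, with 0 < γ ≤ 1. Let W and matrices X_t, X_{t+1}, X^s_t, X^s_{t+1} satisfy X_{t+1} = (A+BK_t) X_t (A+BK_t)ᵀ + W, X^s_t = (A+BK_t) X^s_t (A+BK_t)ᵀ + W, and X^s_{t+1} = (A+BK_{t+1}) X^s_{t+1} (A+BK_{t+1})ᵀ + W. Then ‖H_{t+1}^{-1}(X_{t+1} − X^s_{t+1})(H_{t+1}^{-1})ᵀ‖ ≤ (1 − γ/2)² ‖H_t^{-1}(X_t − X^s_t)(H_t^{-1})ᵀ‖ + ‖H_{t+1}^{-1}‖² ‖X^s_t − X^s_{t+1}‖. -/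

import Mathlib

set_option maxHeartbeats 1000000


open Matrix
open scoped Matrix.Norms.L2Operator

/-- **One-step contraction inequality** (Equation (B.3) in the proof of Lemma B.1):
the conjugated covariance error contracts by `(1 - γ/2)²` up to the drift of the
steady-state covariances. -/
theorem one_step_contraction
    {n m : ℕ}
    (A : Matrix (Fin n) (Fin n) ℝ) (B : Matrix (Fin n) (Fin m) ℝ)
    (Kt Kt1 : Matrix (Fin m) (Fin n) ℝ)
    (Ht Ht1 Lt Lt1 : Matrix (Fin n) (Fin n) ℝ)
    (γ : ℝ) (hγ0 : 0 < γ) (hγ1 : γ ≤ 1)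
    (hHtUnit : IsUnit Ht.det) (hHt1Unit : IsUnit Ht1.det)
    (hfact : A + B * Kt = Ht * Lt * Ht⁻¹)
    (hfact1 : A + B * Kt1 = Ht1 * Lt1 * Ht1⁻¹)
    (hLt : ‖Lt‖ ≤ 1 - γ)
    (hHH : ‖Ht1⁻¹ * Ht‖ ≤ 1 + γ / 2)
    (W Xt Xt1 Xst Xst1 : Matrix (Fin n) (Fin n) ℝ)
    (hX : Xt1 = (A + B * Kt) * Xt * (A + B * Kt)ᵀ + W)
    (hXs : Xst = (A + B * Kt) * Xst * (A + B * Kt)ᵀ + W)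
    (hXs1 : Xst1 = (A + B * Kt1) * Xst1 * (A + B * Kt1)ᵀ + W) :
    ‖Ht1⁻¹ * (Xt1 - Xst1) * (Ht1⁻¹)ᵀ‖ ≤
      (1 - γ / 2) ^ 2 * ‖Ht⁻¹ * (Xt - Xst) * (Ht⁻¹)ᵀ‖ +
      ‖Ht1⁻¹‖ ^ 2 * ‖Xst - Xst1‖ := by
  set P := A + B * Kt with hP
  set M := Ht1⁻¹ * Ht * Lt with hM
  set Y := Ht⁻¹ * (Xt - Xst) * (Ht⁻¹)ᵀ with hY
  have hHtinv : Ht⁻¹ * Ht = 1 := Matrix.nonsing_inv_mul Ht hHtUnit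
  -- Ht1⁻¹ * P = M * Ht⁻¹
  have h1 : Ht1⁻¹ * P = M * Ht⁻¹ := by
    rw [hfact, hM]
    simp only [Matrix.mul_assoc]
  have hdiff : Xt1 - Xst = P * (Xt - Xst) * Pᵀ := by
    calc Xt1 - Xst = (P * Xt * Pᵀ + W) - (P * Xst * Pᵀ + W) := by rw [← hX, ← hXs]
      _ = P * (Xt - Xst) * Pᵀ := by noncomm_ring
  have key : Ht1⁻¹ * (Xt1 - Xst1) * (Ht1⁻¹)ᵀ
      = M * Y * Mᵀ + Ht1⁻¹ * (Xst - Xst1) * (Ht1⁻¹)ᵀ := by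
    have h2 : Xt1 - Xst1 = P * (Xt - Xst) * Pᵀ + (Xst - Xst1) := by
      rw [← hdiff]; abel
    rw [h2]
    have h3 : M * Y * Mᵀ = Ht1⁻¹ * (P * (Xt - Xst) * Pᵀ) * (Ht1⁻¹)ᵀ := by
      have hPT : Pᵀ * (Ht1⁻¹)ᵀ = (Ht⁻¹)ᵀ * Mᵀ := by
        rw [← Matrix.transpose_mul, ← Matrix.transpose_mul, h1]
      calc M * Y * Mᵀ = (M * Ht⁻¹) * (Xt - Xst) * ((Ht⁻¹)ᵀ * Mᵀ) := by
            rw [hY]; noncomm_ring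
        _ = (Ht1⁻¹ * P) * (Xt - Xst) * (Pᵀ * (Ht1⁻¹)ᵀ) := by rw [h1, hPT]
        _ = Ht1⁻¹ * (P * (Xt - Xst) * Pᵀ) * (Ht1⁻¹)ᵀ := by noncomm_ring
    rw [h3]
    noncomm_ring
  have hTM : ‖Mᵀ‖ = ‖M‖ := by
    rw [← Matrix.conjTranspose_eq_transpose_of_trivial]
    exact Matrix.l2_opNorm_conjTranspose M
  have hTH : ‖(Ht1⁻¹)ᵀ‖ = ‖Ht1⁻¹‖ := by
    rw [← Matrix.conjTranspose_eq_transpose_of_trivial]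
    exact Matrix.l2_opNorm_conjTranspose Ht1⁻¹
  have hMle : ‖M‖ ≤ 1 - γ / 2 := by
    have h4 : ‖M‖ ≤ ‖Ht1⁻¹ * Ht‖ * ‖Lt‖ := norm_mul_le _ _
    have hLt0 : (0:ℝ) ≤ ‖Lt‖ := norm_nonneg _
    have hHH0 : (0:ℝ) ≤ ‖Ht1⁻¹ * Ht‖ := norm_nonneg _
    nlinarith [h4]
  have hM0 : (0:ℝ) ≤ ‖M‖ := norm_nonneg _
  have hY0 : (0:ℝ) ≤ ‖Y‖ := norm_nonneg _
  have hγ2 : (0:ℝ) ≤ 1 - γ / 2 := by linarith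
  calc ‖Ht1⁻¹ * (Xt1 - Xst1) * (Ht1⁻¹)ᵀ‖
      ≤ ‖M * Y * Mᵀ‖ + ‖Ht1⁻¹ * (Xst - Xst1) * (Ht1⁻¹)ᵀ‖ := by
        rw [key]; exact norm_add_le _ _
    _ ≤ ‖M‖ * ‖Y‖ * ‖M‖ + ‖Ht1⁻¹‖ * ‖Xst - Xst1‖ * ‖Ht1⁻¹‖ := by
        refine add_le_add ?_ ?_
        · calc ‖M * Y * Mᵀ‖ ≤ ‖M * Y‖ * ‖Mᵀ‖ := norm_mul_le _ _
            _ ≤ ‖M‖ * ‖Y‖ * ‖M‖ := by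
                rw [hTM]
                exact mul_le_mul_of_nonneg_right (norm_mul_le _ _) (norm_nonneg _)
        · calc ‖Ht1⁻¹ * (Xst - Xst1) * (Ht1⁻¹)ᵀ‖
              ≤ ‖Ht1⁻¹ * (Xst - Xst1)‖ * ‖(Ht1⁻¹)ᵀ‖ := norm_mul_le _ _
            _ ≤ ‖Ht1⁻¹‖ * ‖Xst - Xst1‖ * ‖Ht1⁻¹‖ := by
                rw [hTH]
                exact mul_le_mul_of_nonneg_right (norm_mul_le _ _) (norm_nonneg _)
    _ ≤ (1 - γ / 2) ^ 2 * ‖Y‖ + ‖Ht1⁻¹‖ ^ 2 * ‖Xst - Xst1‖ := by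
        have hMM : ‖M‖ * ‖M‖ ≤ (1 - γ / 2) ^ 2 := by nlinarith
        have : ‖M‖ * ‖Y‖ * ‖M‖ ≤ (1 - γ / 2) ^ 2 * ‖Y‖ := by
          nlinarith [mul_le_mul_of_nonneg_right hMM hY0]
        nlinarith [this]
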